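/- Let (Ω_n)_{n≥1} and (Ω̄_n)_{n≥1} be two families of rational functions in ℚ(y). Then Ω_n = (y^{−1} − y)·Σ_{m ∣ n} (μ(m)/m)·ψₘ(Ω̄_{n/m}) holds for all n ≥ 1 if and only if Ω̄_n = Σ_{m ∣ n} (1/m)·ψₘ(Ω_{n/m})/(y^{−m} − yᵐ) holds for all n ≥ 1. -/

import Mathlib

/-- The `ℚ`-algebra endomorphism `ψₘ` of `ℚ(y)` determined by `y ↦ yᵐ`, so that
`ψₘ(F)(y) = F(yᵐ)`. -/
noncomputable def psiR (m : ℕ) (F : RatFunc ℚ) : RatFunc ℚ :=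
  algebraMap (Polynomial ℚ) (RatFunc ℚ) (F.num.comp (Polynomial.X ^ m)) /
    algebraMap (Polynomial ℚ) (RatFunc ℚ) (F.denom.comp (Polynomial.X ^ m))

namespace Stmt10Aux

open Polynomial Finset nonZeroDivisors

noncomputable def compHom (m : ℕ) : Polynomial ℚ →+* Polynomial ℚ :=
  Polynomial.eval₂RingHom Polynomial.C (Polynomial.X ^ m)

lemma compHom_apply (m : ℕ) (p : Polynomial ℚ) : compHom m p = p.comp (X ^ m) := rfl

lemma comp_pow_ne_zero {m : ℕ} (hm : m ≠ 0) {p : Polynomial ℚ} (hp : p ≠ 0) :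
    p.comp (X ^ m) ≠ 0 := by
  rw [Ne, Polynomial.comp_eq_zero_iff]
  rintro (h | ⟨-, h2⟩)
  · exact hp h
  · have := congrArg Polynomial.natDegree h2
    rw [Polynomial.natDegree_X_pow, Polynomial.natDegree_C] at this
    exact hm this

lemma hcond {m : ℕ} (hm : m ≠ 0) :
    (Polynomial ℚ)⁰ ≤ (Polynomial ℚ)⁰.comap (compHom m) := by
  intro p hp
  simp only [Submonoid.mem_comap]
  rw [mem_nonZeroDivisors_iff_ne_zero] at hp ⊢
  exact comp_pow_ne_zero hm hp

noncomputable def Phi (m : ℕ) : RatFunc ℚ →+* RatFunc ℚ :=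
  if hm : m = 0 then RingHom.id _ else RatFunc.mapRingHom (compHom m) (hcond hm)

lemma Phi_div {m : ℕ} (hm : m ≠ 0) (p q : Polynomial ℚ) :
    Phi m (algebraMap _ _ p / algebraMap _ _ q) =
      algebraMap (Polynomial ℚ) (RatFunc ℚ) (p.comp (X ^ m)) /
        algebraMap (Polynomial ℚ) (RatFunc ℚ) (q.comp (X ^ m)) := by
  rw [Phi, dif_neg hm]
  show (RatFunc.mapRingHom (compHom m) (hcond hm) :
      RatFunc ℚ → RatFunc ℚ) (algebraMap _ _ p / algebraMap _ _ q) = _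
  rw [RatFunc.coe_mapRingHom_eq_coe_map, RatFunc.map_apply_div]
  rfl

lemma psiR_eq {m : ℕ} (hm : m ≠ 0) (F : RatFunc ℚ) : psiR m F = Phi m F := by
  conv_rhs => rw [← F.num_div_denom]
  rw [Phi_div hm, psiR]

lemma Phi_C (m : ℕ) (q : ℚ) : Phi m (RatFunc.C q) = RatFunc.C q := by
  rcases eq_or_ne m 0 with rfl | hm
  · simp [Phi]
  · rw [← psiR_eq hm, psiR, RatFunc.num_C, RatFunc.denom_C, Polynomial.C_comp,
      Polynomial.one_comp, map_one, div_one, RatFunc.algebraMap_C]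

lemma Phi_X {m : ℕ} (hm : m ≠ 0) : Phi m RatFunc.X = RatFunc.X ^ m := by
  rw [← psiR_eq hm, psiR, RatFunc.num_X, RatFunc.denom_X, Polynomial.X_comp,
    Polynomial.one_comp, map_one, div_one, map_pow, RatFunc.algebraMap_X]

lemma Phi_one (F : RatFunc ℚ) : Phi 1 F = F := by
  rw [← psiR_eq one_ne_zero, psiR, pow_one, Polynomial.comp_X, Polynomial.comp_X,
    F.num_div_denom]

lemma Phi_comp {m k : ℕ} (hm : m ≠ 0) (hk : k ≠ 0) (F : RatFunc ℚ) :
    Phi m (Phi k F) = Phi (m * k) F := by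
  have hco : ∀ p : Polynomial ℚ, (p.comp (X ^ k)).comp (X ^ m) = p.comp (X ^ (m * k)) := by
    intro p
    rw [Polynomial.comp_assoc, Polynomial.X_pow_comp, ← pow_mul]
  have h1 : Phi m (Phi k F) = algebraMap (Polynomial ℚ) (RatFunc ℚ) (F.num.comp (X ^ (m * k))) /
      algebraMap (Polynomial ℚ) (RatFunc ℚ) (F.denom.comp (X ^ (m * k))) := by
    conv_lhs => rw [← F.num_div_denom, Phi_div hk, Phi_div hm]
    rw [hco, hco]
  have h2 : Phi (m * k) F = algebraMap (Polynomial ℚ) (RatFunc ℚ) (F.num.comp (X ^ (m * k))) /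
      algebraMap (Polynomial ℚ) (RatFunc ℚ) (F.denom.comp (X ^ (m * k))) := by
    conv_lhs => rw [← F.num_div_denom, Phi_div (mul_ne_zero hm hk)]
  rw [h1, h2]

lemma nat_div_dvd_div {e d n : ℕ} (he : e ≠ 0) (hed : e ∣ d) (hdn : d ∣ n) :
    d / e ∣ n / e := by
  obtain ⟨c, rfl⟩ := hdn
  obtain ⟨f, rfl⟩ := hed
  rw [Nat.mul_div_cancel_left f (Nat.pos_of_ne_zero he), mul_assoc,
    Nat.mul_div_cancel_left _ (Nat.pos_of_ne_zero he)]
  exact ⟨c, rfl⟩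

lemma swap_divisors {M : Type*} [AddCommMonoid M] (n : ℕ) (hn : n ≠ 0) (F : ℕ → ℕ → M) :
    ∑ m ∈ n.divisors, ∑ k ∈ (n / m).divisors, F m k
      = ∑ d ∈ n.divisors, ∑ e ∈ d.divisors, F e (d / e) := by
  rw [Finset.sum_sigma', Finset.sum_sigma']
  refine Finset.sum_nbij' (fun x => ⟨x.1 * x.2, x.1⟩) (fun x => ⟨x.2, x.1 / x.2⟩)
    ?_ ?_ ?_ ?_ ?_
  · rintro ⟨m, k⟩ hx
    rw [Finset.mem_sigma] at hx ⊢
    obtain ⟨h1, h2⟩ := hx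
    obtain ⟨hmd, -⟩ := Nat.mem_divisors.mp h1
    obtain ⟨hkd, -⟩ := Nat.mem_divisors.mp h2
    have hm0 : m ≠ 0 := (Nat.pos_of_mem_divisors h1).ne'
    have hk0 : k ≠ 0 := (Nat.pos_of_mem_divisors h2).ne'
    have hmk : m * k ∣ n := by
      have : n = m * (n / m) := (Nat.mul_div_cancel' hmd).symm
      rw [this]
      exact mul_dvd_mul_left m hkd
    exact ⟨Nat.mem_divisors.mpr ⟨hmk, hn⟩,
      Nat.mem_divisors.mpr ⟨⟨k, rfl⟩, mul_ne_zero hm0 hk0⟩⟩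
  · rintro ⟨d, e⟩ hx
    rw [Finset.mem_sigma] at hx ⊢
    obtain ⟨h1, h2⟩ := hx
    obtain ⟨hdn, -⟩ := Nat.mem_divisors.mp h1
    obtain ⟨hed, -⟩ := Nat.mem_divisors.mp h2
    have he0 : e ≠ 0 := (Nat.pos_of_mem_divisors h2).ne'
    have hen : e ∣ n := hed.trans hdn
    exact ⟨Nat.mem_divisors.mpr ⟨hen, hn⟩, Nat.mem_divisors.mpr
      ⟨nat_div_dvd_div he0 hed hdn,
        Nat.div_ne_zero_iff.mpr ⟨he0, Nat.le_of_dvd (Nat.pos_of_ne_zero hn) hen⟩⟩⟩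
  · rintro ⟨m, k⟩ hx
    rw [Finset.mem_sigma] at hx
    have hm0 : m ≠ 0 := (Nat.pos_of_mem_divisors hx.1).ne'
    simp [Nat.mul_div_cancel_left k (Nat.pos_of_ne_zero hm0)]
  · rintro ⟨d, e⟩ hx
    rw [Finset.mem_sigma] at hx
    obtain ⟨hed, -⟩ := Nat.mem_divisors.mp hx.2
    simp [Nat.mul_div_cancel' hed]
  · rintro ⟨m, k⟩ hx
    rw [Finset.mem_sigma] at hx
    have hm0 : m ≠ 0 := (Nat.pos_of_mem_divisors hx.1).ne'
    simp [Nat.mul_div_cancel_left k (Nat.pos_of_ne_zero hm0)]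

lemma sum_moeb (d : ℕ) (hd : d ≠ 0) :
    ∑ e ∈ d.divisors, ((ArithmeticFunction.moebius e : ℤ) : ℚ)
      = if d = 1 then 1 else 0 := by
  have h := congrArg (fun f : ArithmeticFunction ℤ => f d)
    ArithmeticFunction.moebius_mul_coe_zeta
  simp only [ArithmeticFunction.mul_apply, ArithmeticFunction.one_apply,
    ArithmeticFunction.natCoe_apply] at h
  have h2 : ∑ x ∈ d.divisorsAntidiagonal,
      (ArithmeticFunction.moebius x.1) * (ArithmeticFunction.zeta x.2 : ℤ)
      = ∑ e ∈ d.divisors, (ArithmeticFunction.moebius e : ℤ) := by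
    rw [← Nat.sum_divisorsAntidiagonal
      (fun i j => (ArithmeticFunction.moebius i : ℤ))]
    refine Finset.sum_congr rfl fun x hx => ?_
    have : x.2 ≠ 0 := Nat.right_ne_zero_of_mem_divisorsAntidiagonal hx
    simp [ArithmeticFunction.zeta_apply, this]
  rw [h2] at h
  rw [← Int.cast_sum, h]
  split <;> simp

lemma core (w v : ℕ → ℚ)
    (hconv : ∀ d : ℕ, d ≠ 0 → ∑ e ∈ d.divisors, v e * w (d / e) = if d = 1 then 1 else 0)
    (a b : ℕ → RatFunc ℚ)
    (hab : ∀ n : ℕ, 1 ≤ n → a n = ∑ m ∈ n.divisors, RatFunc.C (w m) * Phi m (b (n / m)))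
    (n : ℕ) (hn : 1 ≤ n) :
    b n = ∑ m ∈ n.divisors, RatFunc.C (v m) * Phi m (a (n / m)) := by
  have hn0 : n ≠ 0 := by omega
  symm
  calc ∑ m ∈ n.divisors, RatFunc.C (v m) * Phi m (a (n / m))
      = ∑ m ∈ n.divisors, ∑ k ∈ (n / m).divisors,
          RatFunc.C (v m * w k) * Phi (m * k) (b (n / (m * k))) := by
        refine Finset.sum_congr rfl fun m hm => ?_
        obtain ⟨hmd, -⟩ := Nat.mem_divisors.mp hm
        have hm0 : m ≠ 0 := (Nat.pos_of_mem_divisors hm).ne'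
        have hnm : 1 ≤ n / m :=
          Nat.div_pos (Nat.le_of_dvd (Nat.pos_of_ne_zero hn0) hmd) (Nat.pos_of_ne_zero hm0)
        rw [hab (n / m) hnm, map_sum, Finset.mul_sum]
        refine Finset.sum_congr rfl fun k hk => ?_
        have hk0 : k ≠ 0 := (Nat.pos_of_mem_divisors hk).ne'
        rw [map_mul, Phi_C, Phi_comp hm0 hk0, Nat.div_div_eq_div_mul, map_mul, ← mul_assoc]
    _ = ∑ d ∈ n.divisors, ∑ e ∈ d.divisors,
          RatFunc.C (v e * w (d / e)) * Phi (e * (d / e)) (b (n / (e * (d / e)))) :=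
        swap_divisors n hn0 _
    _ = ∑ d ∈ n.divisors,
          RatFunc.C (∑ e ∈ d.divisors, v e * w (d / e)) * Phi d (b (n / d)) := by
        refine Finset.sum_congr rfl fun d hd => ?_
        rw [map_sum, Finset.sum_mul]
        refine Finset.sum_congr rfl fun e he => ?_
        obtain ⟨hed, -⟩ := Nat.mem_divisors.mp he
        rw [Nat.mul_div_cancel' hed]
    _ = b n := by
        rw [Finset.sum_eq_single_of_mem 1 (Nat.one_mem_divisors.mpr hn0)]
        · rw [hconv 1 one_ne_zero, if_pos rfl, map_one, one_mul, Nat.div_one, Phi_one]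
        · intro d hd hd1
          rw [hconv d (Nat.pos_of_mem_divisors hd).ne', if_neg hd1, map_zero, zero_mul]

end Stmt10Aux

open Stmt10Aux Finset in
/-- Let `(Ω_n)` and `(Ω̄_n)` be two families in `ℚ(y)`.  Then
`Ω_n = (y⁻¹ − y)·Σ_{m∣n} (μ(m)/m)·ψₘ(Ω̄_{n/m})` holds for all `n ≥ 1` if and only if
`Ω̄_n = Σ_{m∣n} (1/m)·ψₘ(Ω_{n/m})/(y^{−m} − yᵐ)` holds for all `n ≥ 1`. -/
theorem stmt10 (Ω Ωb : ℕ → RatFunc ℚ) :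
    (∀ n : ℕ, 1 ≤ n → Ω n = ((RatFunc.X : RatFunc ℚ)⁻¹ - RatFunc.X) *
        ∑ m ∈ n.divisors,
          RatFunc.C (((ArithmeticFunction.moebius m : ℤ) : ℚ) / m) * psiR m (Ωb (n / m)))
      ↔ (∀ n : ℕ, 1 ≤ n → Ωb n = ∑ m ∈ n.divisors,
          RatFunc.C (1 / (m : ℚ)) *
            (psiR m (Ω (n / m)) / (((RatFunc.X : RatFunc ℚ) ^ m)⁻¹ - RatFunc.X ^ m))) := by
  set D : RatFunc ℚ := (RatFunc.X : RatFunc ℚ)⁻¹ - RatFunc.X with hDdef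
  have hX : (RatFunc.X : RatFunc ℚ) ≠ 0 := RatFunc.X_ne_zero
  have hD : D ≠ 0 := by
    intro h
    have h1 : (RatFunc.X : RatFunc ℚ)⁻¹ = RatFunc.X := sub_eq_zero.mp h
    have h2 : (1 : RatFunc ℚ) = RatFunc.X * RatFunc.X := by
      rw [← inv_mul_cancel₀ hX, h1]
    have h3 := congrArg RatFunc.intDegree h2
    rw [RatFunc.intDegree_mul hX hX, RatFunc.intDegree_X, RatFunc.intDegree_one] at h3
    omega
  set a : ℕ → RatFunc ℚ := fun n => D⁻¹ * Ω n with hadef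
  have hPhiD : ∀ m : ℕ, m ≠ 0 → Phi m D = ((RatFunc.X : RatFunc ℚ) ^ m)⁻¹ - RatFunc.X ^ m := by
    intro m hm
    rw [hDdef, map_sub, map_inv₀, Phi_X hm]
  have hPhiD0 : ∀ m : ℕ, m ≠ 0 → Phi m D ≠ 0 := by
    intro m hm h
    exact hD ((Phi m).injective (h.trans (map_zero (Phi m)).symm))
  -- relation 2 rewriting
  have rel2 : ∀ n : ℕ, 1 ≤ n →
      ((Ωb n = ∑ m ∈ n.divisors, RatFunc.C (1 / (m : ℚ)) *
          (psiR m (Ω (n / m)) / (((RatFunc.X : RatFunc ℚ) ^ m)⁻¹ - RatFunc.X ^ m)))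
        ↔ (Ωb n = ∑ m ∈ n.divisors, RatFunc.C (1 / (m : ℚ)) * Phi m (a (n / m)))) := by
    intro n hn
    have : ∀ m ∈ n.divisors,
        RatFunc.C (1 / (m : ℚ)) *
            (psiR m (Ω (n / m)) / (((RatFunc.X : RatFunc ℚ) ^ m)⁻¹ - RatFunc.X ^ m))
          = RatFunc.C (1 / (m : ℚ)) * Phi m (a (n / m)) := by
      intro m hm
      have hm0 : m ≠ 0 := (Nat.pos_of_mem_divisors hm).ne'
      have hΩ : Ω (n / m) = D * a (n / m) := by
        show Ω (n / m) = D * (D⁻¹ * Ω (n / m))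
        rw [mul_inv_cancel_left₀ hD]
      rw [psiR_eq hm0, ← hPhiD m hm0, hΩ, map_mul, mul_comm ((Phi m) D),
        mul_div_assoc, div_self (hPhiD0 m hm0), mul_one]
    rw [Finset.sum_congr rfl this]
  -- relation 1 rewriting
  have rel1 : ∀ n : ℕ, 1 ≤ n →
      ((Ω n = D * ∑ m ∈ n.divisors,
          RatFunc.C (((ArithmeticFunction.moebius m : ℤ) : ℚ) / m) * psiR m (Ωb (n / m)))
        ↔ (a n = ∑ m ∈ n.divisors,
          RatFunc.C (((ArithmeticFunction.moebius m : ℤ) : ℚ) / m) * Phi m (Ωb (n / m)))) := by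
    intro n hn
    have hs : ∑ m ∈ n.divisors,
        RatFunc.C (((ArithmeticFunction.moebius m : ℤ) : ℚ) / m) * psiR m (Ωb (n / m))
        = ∑ m ∈ n.divisors,
        RatFunc.C (((ArithmeticFunction.moebius m : ℤ) : ℚ) / m) * Phi m (Ωb (n / m)) := by
      refine Finset.sum_congr rfl fun m hm => ?_
      rw [psiR_eq (Nat.pos_of_mem_divisors hm).ne']
    rw [hs]
    constructor
    · intro h
      show D⁻¹ * Ω n = _
      rw [h, inv_mul_cancel_left₀ hD]
    · intro h
      have h' : D⁻¹ * Ω n = ∑ m ∈ n.divisors,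
          RatFunc.C (((ArithmeticFunction.moebius m : ℤ) : ℚ) / m) * Phi m (Ωb (n / m)) := h
      rw [← h', mul_inv_cancel_left₀ hD]
  -- convolution identities
  have hconv1 : ∀ d : ℕ, d ≠ 0 →
      ∑ e ∈ d.divisors, (1 / (e : ℚ)) *
          (((ArithmeticFunction.moebius (d / e) : ℤ) : ℚ) / ((d / e : ℕ) : ℚ))
        = if d = 1 then 1 else 0 := by
    intro d hd
    have key : ∀ e ∈ d.divisors,
        (1 / (e : ℚ)) * (((ArithmeticFunction.moebius (d / e) : ℤ) : ℚ) / ((d / e : ℕ) : ℚ))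
          = ((ArithmeticFunction.moebius (d / e) : ℤ) : ℚ) / d := by
      intro e he
      obtain ⟨hed, -⟩ := Nat.mem_divisors.mp he
      have hde : (e : ℚ) * ((d / e : ℕ) : ℚ) = d := by
        rw [← Nat.cast_mul, Nat.mul_div_cancel' hed]
      rw [div_mul_div_comm, one_mul, hde]
    rw [Finset.sum_congr rfl key, ← Finset.sum_div, Nat.sum_div_divisors d
      (fun e => ((ArithmeticFunction.moebius e : ℤ) : ℚ)), sum_moeb d hd]
    by_cases h : d = 1 <;> simp [h]
  have hconv2 : ∀ d : ℕ, d ≠ 0 →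
      ∑ e ∈ d.divisors, (((ArithmeticFunction.moebius e : ℤ) : ℚ) / e) * (1 / ((d / e : ℕ) : ℚ))
        = if d = 1 then 1 else 0 := by
    intro d hd
    have key : ∀ e ∈ d.divisors,
        (((ArithmeticFunction.moebius e : ℤ) : ℚ) / e) * (1 / ((d / e : ℕ) : ℚ))
          = ((ArithmeticFunction.moebius e : ℤ) : ℚ) / d := by
      intro e he
      obtain ⟨hed, -⟩ := Nat.mem_divisors.mp he
      have hde : (e : ℚ) * ((d / e : ℕ) : ℚ) = d := by
        rw [← Nat.cast_mul, Nat.mul_div_cancel' hed]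
      rw [div_mul_div_comm, mul_one, hde]
    rw [Finset.sum_congr rfl key, ← Finset.sum_div, sum_moeb d hd]
    by_cases h : d = 1 <;> simp [h]
  constructor
  · intro H n hn
    rw [rel2 n hn]
    exact core (fun m => ((ArithmeticFunction.moebius m : ℤ) : ℚ) / m)
      (fun m => 1 / (m : ℚ)) hconv1 a Ωb
      (fun n hn => (rel1 n hn).mp (H n hn)) n hn
  · intro H n hn
    rw [rel1 n hn]
    exact core (fun m => 1 / (m : ℚ))
      (fun m => ((ArithmeticFunction.moebius m : ℤ) : ℚ) / m) hconv2 Ωb a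
      (fun n hn => (rel2 n hn).mp (H n hn)) n hn
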